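/- Let 1 < p < ∞, let θ : Ω → ℝ be measurable on a measurable set Ω ⊂ ℝⁿ, and suppose the pushforward measure ν_θ = θ_#(Lebesgue on Ω) has a density w_θ ∈ L^∞(ℝ) with respect to Lebesgue measure. For h ∈ L¹(Ω) ∩ L^p(Ω), let A_θ h be the Lebesgue density of θ_#(h dx). Then ‖A_θ h‖_{L^p(ℝ)} ≤ ‖w_θ‖_{L^∞}^{1/p'} ‖h‖_{L^p(Ω)}, where 1/p + 1/p' = 1; consequently A_θ extends uniquely to a bounded operator L^p(Ω) → L^p(ℝ) with the same norm bound. -/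

import Mathlib

open MeasureTheory Set Metric Filter
open scoped ENNReal NNReal

private lemma stmt10_alg (C R v : ℝ≥0∞) (hv0 : v ≠ 0) (hvt : v ≠ ⊤) {a b : ℝ}
    (ha : 0 ≤ a) (hb : 0 ≤ b) (hab : a + b = 1) :
    v⁻¹ * ((C * v) ^ a * R ^ b) = C ^ a * (R / v) ^ b := by
  rw [ENNReal.mul_rpow_of_nonneg _ _ ha, ENNReal.div_rpow_of_nonneg _ _ hb]
  have hva : v ^ a ≠ 0 := by simp [hv0, hvt]
  have hvat : v ^ a ≠ ⊤ := by simp [hv0, hvt]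
  have hvb : v ^ b ≠ 0 := by simp [hv0, hvt]
  have hvbt : v ^ b ≠ ⊤ := by simp [hv0, hvt]
  have hv : v = v ^ a * v ^ b := by
    rw [← ENNReal.rpow_add _ _ hv0 hvt, hab, ENNReal.rpow_one]
  calc v⁻¹ * (C ^ a * v ^ a * R ^ b)
      = ((v ^ a)⁻¹ * (v ^ b)⁻¹) * (C ^ a * v ^ a * R ^ b) := by
        rw [← ENNReal.mul_inv (Or.inl hva) (Or.inl hvat), ← hv]
    _ = C ^ a * (R ^ b * (v ^ b)⁻¹) * ((v ^ a)⁻¹ * v ^ a) := by ring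
    _ = C ^ a * (R ^ b / v ^ b) := by
        rw [ENNReal.inv_mul_cancel hva hvat, mul_one, div_eq_mul_inv]


/-- Abstract `L^p` bridge. If the pushforward `θ_#(dx|Ω)` has a
Lebesgue density `w_θ` bounded by `W`, and `A_θ h` is the Lebesgue density of
`θ_#(h dx)` for `h ∈ L¹ ∩ L^p(Ω)`, then
`‖A_θ h‖_{L^p(ℝ)} ≤ W^{1/p'} ‖h‖_{L^p(Ω)}`. -/
theorem stmt10 {n : ℕ} (Ω : Set (Fin n → ℝ)) (hΩ : MeasurableSet Ω)
    (θ : (Fin n → ℝ) → ℝ) (hθ : Measurable θ)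
    (p p' : ℝ) (hp : 1 < p) (hpp' : 1 / p + 1 / p' = 1)
    (w : ℝ → ℝ) (hwm : Measurable w) (hw0 : ∀ t, 0 ≤ w t)
    (W : ℝ) (hW0 : 0 ≤ W) (hwW : ∀ᵐ t : ℝ, w t ≤ W)
    (hdens : Measure.map θ (volume.restrict Ω)
      = volume.withDensity fun t => ENNReal.ofReal (w t))
    (h : (Fin n → ℝ) → ℂ) (hmeas : Measurable h)
    (h1 : IntegrableOn h Ω)
    (hLp : MemLp h (ENNReal.ofReal p) (volume.restrict Ω))
    (A : ℝ → ℂ) (hA : Integrable A)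
    (hAdens : ∀ E : Set ℝ, MeasurableSet E →
      ∫ t in E, A t = ∫ x in Ω ∩ θ ⁻¹' E, h x) :
    eLpNorm A (ENNReal.ofReal p) volume
      ≤ ENNReal.ofReal (W ^ (1 / p'))
          * eLpNorm h (ENNReal.ofReal p) (volume.restrict Ω) := by
  have hc : p.HolderConjugate p' := Real.holderConjugate_iff.mpr ⟨hp, by simpa [one_div] using hpp'⟩
  have hp0 : 0 < p := hc.pos
  have hp'0 : 0 < p' := hc.symm.pos
  have hip : (0:ℝ) ≤ 1 / p := by positivity
  have hip' : (0:ℝ) ≤ 1 / p' := by positivity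
  set q : ℝ≥0∞ := ENNReal.ofReal p with hq
  have hq0 : q ≠ 0 := by simp [hq, ENNReal.ofReal_eq_zero, not_le, hp0]
  have hqt : q ≠ ⊤ := ENNReal.ofReal_ne_top
  have hqr : q.toReal = p := ENNReal.toReal_ofReal hp0.le
  -- the measure ρ = θ_# (|h|^p dx|Ω)
  have hgm : Measurable (fun x => (‖h x‖₊ : ℝ≥0∞) ^ p) :=
    hmeas.nnnorm.coe_nnreal_ennreal.pow_const p
  set ρ : Measure ℝ :=
    Measure.map θ ((volume.restrict Ω).withDensity fun x => (‖h x‖₊ : ℝ≥0∞) ^ p) with hρ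
  have hρE : ∀ E : Set ℝ, MeasurableSet E →
      ρ E = ∫⁻ x in Ω ∩ θ ⁻¹' E, (‖h x‖₊ : ℝ≥0∞) ^ p := by
    intro E hE
    rw [hρ, Measure.map_apply hθ hE, withDensity_apply _ (hθ hE),
      Measure.restrict_restrict (hθ hE), inter_comm]
  have hρuniv : ρ univ = ∫⁻ x in Ω, (‖h x‖₊ : ℝ≥0∞) ^ p := by
    have := hρE univ MeasurableSet.univ
    simpa using this
  have helpn : eLpNorm h q (volume.restrict Ω)
      = (∫⁻ x in Ω, (‖h x‖₊ : ℝ≥0∞) ^ p) ^ (1 / p) := by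
    simp only [eLpNorm_eq_lintegral_rpow_enorm_toReal hq0 hqt, hqr, enorm_eq_nnnorm]
  have hfin : ∫⁻ x in Ω, (‖h x‖₊ : ℝ≥0∞) ^ p ≠ ⊤ := by
    intro htop
    have := hLp.2
    rw [helpn, htop, ENNReal.top_rpow_of_pos (by positivity)] at this
    exact (lt_irrefl _ this)
  haveI : IsFiniteMeasure ρ := ⟨by rw [hρuniv]; exact hfin.lt_top⟩
  -- volume of slices
  have hvolS : ∀ E : Set ℝ, MeasurableSet E →
      volume (Ω ∩ θ ⁻¹' E) ≤ ENNReal.ofReal W * volume E := by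
    intro E hE
    have h1' : volume (Ω ∩ θ ⁻¹' E) = Measure.map θ (volume.restrict Ω) E := by
      rw [Measure.map_apply hθ hE, Measure.restrict_apply (hθ hE), inter_comm]
    rw [h1', hdens, withDensity_apply _ hE]
    calc ∫⁻ t in E, ENNReal.ofReal (w t)
        ≤ ∫⁻ t in E, ENNReal.ofReal W := by
          refine lintegral_mono_ae ?_
          filter_upwards [ae_restrict_of_ae hwW] with t ht
          exact ENNReal.ofReal_le_ofReal ht
      _ = ENNReal.ofReal W * volume E := by
          rw [setLIntegral_const, mul_comm]
  -- key set estimate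
  have key : ∀ E : Set ℝ, MeasurableSet E →
      (‖∫ t in E, A t‖₊ : ℝ≥0∞)
        ≤ (ENNReal.ofReal W * volume E) ^ (1 / p') * (ρ E) ^ (1 / p) := by
    intro E hE
    have hS : MeasurableSet (Ω ∩ θ ⁻¹' E) := hΩ.inter (hθ hE)
    rw [hAdens E hE]
    calc (‖∫ x in Ω ∩ θ ⁻¹' E, h x‖₊ : ℝ≥0∞)
        ≤ ∫⁻ x in Ω ∩ θ ⁻¹' E, (‖h x‖₊ : ℝ≥0∞) :=
          enorm_integral_le_lintegral_enorm _
      _ ≤ (∫⁻ x in Ω ∩ θ ⁻¹' E, (‖h x‖₊ : ℝ≥0∞) ^ p) ^ (1 / p)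
            * (∫⁻ x in Ω ∩ θ ⁻¹' E, (1:ℝ≥0∞) ^ p') ^ (1 / p') := by
          have := ENNReal.lintegral_mul_le_Lp_mul_Lq (volume.restrict (Ω ∩ θ ⁻¹' E)) hc
            (f := fun x => (‖h x‖₊ : ℝ≥0∞)) (g := fun _ => (1:ℝ≥0∞))
            hmeas.nnnorm.coe_nnreal_ennreal.aemeasurable measurable_const.aemeasurable
          simpa using this
      _ = (ρ E) ^ (1 / p) * (volume (Ω ∩ θ ⁻¹' E)) ^ (1 / p') := by
          rw [hρE E hE]
          congr 1
          simp [lintegral_one, Measure.restrict_apply_univ]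
      _ ≤ (ρ E) ^ (1 / p) * (ENNReal.ofReal W * volume E) ^ (1 / p') := by
          gcongr
          exact hvolS E hE
      _ = (ENNReal.ofReal W * volume E) ^ (1 / p') * (ρ E) ^ (1 / p) := mul_comm _ _
  -- pointwise a.e. bound via Lebesgue differentiation
  set C : ℝ≥0∞ := ENNReal.ofReal W ^ (1 / p') with hC
  have hCt : C ≠ ⊤ := ENNReal.rpow_ne_top_of_nonneg hip' ENNReal.ofReal_ne_top
  set g : ℝ → ℝ≥0∞ := ρ.rnDeriv volume with hg
  have hpt : ∀ᵐ t : ℝ, (‖A t‖₊ : ℝ≥0∞) ≤ C * g t ^ (1 / p) := by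
    have havg : ∀ᵐ t : ℝ,
        Tendsto (fun r => ⨍ y in closedBall t r, A y) (nhdsWithin 0 (Ioi 0)) (nhds (A t)) := by
      filter_upwards [(Besicovitch.vitaliFamily (volume : Measure ℝ)).ae_tendsto_average
        hA.locallyIntegrable] with t ht
      exact ht.comp (Besicovitch.tendsto_filterAt volume t)
    filter_upwards [havg, Besicovitch.ae_tendsto_rnDeriv ρ volume] with t hav hrd
    refine le_of_tendsto_of_tendsto'
      (f := fun r => (‖⨍ y in closedBall t r, A y‖₊ : ℝ≥0∞))
      (g := fun r => C * (ρ (closedBall t r) / volume (closedBall t r)) ^ (1 / p))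
      (b := nhdsWithin 0 (Ioi 0)) ?_ ?_ ?_
    · exact (ENNReal.tendsto_coe.2 ((continuous_nnnorm.tendsto _).comp hav))
    · exact ENNReal.Tendsto.const_mul
        ((ENNReal.continuous_rpow_const.tendsto _).comp hrd) (Or.inr hCt)
    · intro r
      rcases le_or_gt r 0 with hr | hr
      · have hz : volume (closedBall t r) = 0 := by
          rcases lt_or_eq_of_le hr with hr' | hr'
          · rw [Metric.closedBall_eq_empty.2 hr']; simp
          · rw [hr', Metric.closedBall_zero]; exact Real.volume_singleton
        rw [setAverage_eq, hz]
        simp [measureReal_def, hz]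
      · have hv0 : volume (closedBall t r) ≠ 0 :=
          (measure_closedBall_pos volume t hr).ne'
        have hvt : volume (closedBall t r) ≠ ⊤ := measure_closedBall_lt_top.ne
        have havg_eq : ⨍ y in closedBall t r, A y
            = (volume (closedBall t r)).toReal⁻¹ • ∫ y in closedBall t r, A y := by
          rw [setAverage_eq, measureReal_def]
        have hnorm : (‖⨍ y in closedBall t r, A y‖₊ : ℝ≥0∞)
            = (volume (closedBall t r))⁻¹ * ‖∫ y in closedBall t r, A y‖₊ := by
          rw [havg_eq, nnnorm_smul, ENNReal.coe_mul]
          congr 1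
          rw [← enorm_eq_nnnorm, Real.enorm_eq_ofReal (by positivity),
            ENNReal.ofReal_inv_of_pos (ENNReal.toReal_pos hv0 hvt),
            ENNReal.ofReal_toReal hvt]
        rw [hnorm]
        calc (volume (closedBall t r))⁻¹ * (‖∫ y in closedBall t r, A y‖₊ : ℝ≥0∞)
            ≤ (volume (closedBall t r))⁻¹ *
              ((ENNReal.ofReal W * volume (closedBall t r)) ^ (1 / p')
                * (ρ (closedBall t r)) ^ (1 / p)) := by
              gcongr
              exact key _ measurableSet_closedBall
          _ = C * (ρ (closedBall t r) / volume (closedBall t r)) ^ (1 / p) :=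
              stmt10_alg _ _ _ hv0 hvt hip' hip (by linarith [hpp'])
  -- integrate the pointwise bound
  have hbound : ∫⁻ t, (‖A t‖₊ : ℝ≥0∞) ^ p ≤ C ^ p * ρ univ := by
    calc ∫⁻ t, (‖A t‖₊ : ℝ≥0∞) ^ p
        ≤ ∫⁻ t, (C * g t ^ (1 / p)) ^ p := by
          refine lintegral_mono_ae ?_
          filter_upwards [hpt] with t ht
          exact ENNReal.rpow_le_rpow ht hp0.le
      _ = ∫⁻ t, C ^ p * g t := by
          refine lintegral_congr fun t => ?_
          rw [ENNReal.mul_rpow_of_nonneg _ _ hp0.le, ← ENNReal.rpow_mul (g t) (1/p) p,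
            one_div_mul_cancel hp0.ne', ENNReal.rpow_one]
      _ = C ^ p * ∫⁻ t, g t := lintegral_const_mul _ (Measure.measurable_rnDeriv _ _)
      _ ≤ C ^ p * ρ univ := by
          gcongr
          exact Measure.lintegral_rnDeriv_le
  have hAnorm : eLpNorm A q volume = (∫⁻ t, (‖A t‖₊ : ℝ≥0∞) ^ p) ^ (1 / p) := by
    simp only [eLpNorm_eq_lintegral_rpow_enorm_toReal hq0 hqt, hqr, enorm_eq_nnnorm]
  rw [hAnorm, helpn, ← hρuniv]
  calc (∫⁻ t, (‖A t‖₊ : ℝ≥0∞) ^ p) ^ (1 / p)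
      ≤ (C ^ p * ρ univ) ^ (1 / p) := ENNReal.rpow_le_rpow hbound hip
    _ = C * ρ univ ^ (1 / p) := by
        rw [ENNReal.mul_rpow_of_nonneg _ _ hip, ← ENNReal.rpow_mul C p (1/p),
          mul_one_div_cancel hp0.ne', ENNReal.rpow_one]
    _ = ENNReal.ofReal (W ^ (1 / p')) * ρ univ ^ (1 / p) := by
        rw [hC, ← ENNReal.ofReal_rpow_of_nonneg hW0 hip']
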